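/- Define P₀, P₂ : ℕ → ℝ by the recurrences P₀(d) = F₀·P₀(d−1) + F₂·P₂(d−1) and P₂(d) = F₂·P₀(d−1) + F₄·P₂(d−1), with initial vector (P₀(0), P₂(0)) = (F₀, F₂), where F₀, F₂, F₄ are reals with F₀ > 0, F₂ > 0, F₀F₄ ≠ F₂², and (F₀, F₂)ᵀ is not an eigenvector of the matrix [[F₀,F₂],[F₂,F₄]]. If additionally P₀(d) ≠ 0 and P₂(d) ≠ 0 for all d, then the map d ↦ P₂(d)/P₀(d) is injective. -/

import Mathlib

private def sAux (T D : ℝ) : ℕ → ℝ × ℝ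
  | 0 => (1, 0)
  | d + 1 => (-D * (sAux T D d).2, (sAux T D d).1 + T * (sAux T D d).2)

theorem stmt_12 (F0 F2 F4 : ℝ) (hF0 : 0 < F0) (hF2 : 0 < F2) (hdet : F0 * F4 ≠ F2 ^ 2)
    (heig : ¬ ∃ c : ℝ, Matrix.mulVec !![F0, F2; F2, F4] ![F0, F2] = c • ![F0, F2])
    (P0 P2 : ℕ → ℝ) (h00 : P0 0 = F0) (h20 : P2 0 = F2)
    (h0 : ∀ d, P0 (d + 1) = F0 * P0 d + F2 * P2 d)
    (h2 : ∀ d, P2 (d + 1) = F2 * P0 d + F4 * P2 d)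
    (hP0 : ∀ d, P0 d ≠ 0) (hP2 : ∀ d, P2 d ≠ 0) :
    Function.Injective (fun d => P2 d / P0 d) := by
  have hdet' : F2 ^ 2 - F0 * F4 ≠ 0 := sub_ne_zero_of_ne (Ne.symm hdet)
  have key : ∀ a p : ℕ, P2 a * P0 (a + (p + 1)) = P2 (a + (p + 1)) * P0 a → False := by
    intro a p hcross
    set T : ℝ := F0 + F4 with hT
    set D : ℝ := F0 * F4 - F2 ^ 2 with hD
    -- descent step
    have desc : ∀ m, P2 (m + 1) * P0 (m + 1 + (p + 1)) = P2 (m + 1 + (p + 1)) * P0 (m + 1) →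
        P2 m * P0 (m + (p + 1)) = P2 (m + (p + 1)) * P0 m := by
      intro m h
      rw [show m + 1 + (p + 1) = (m + (p + 1)) + 1 from by omega] at h
      rw [h2 m, h0 (m + (p + 1)), h2 (m + (p + 1)), h0 m] at h
      have hz : (F2 ^ 2 - F0 * F4) * (P2 m * P0 (m + (p + 1)) - P2 (m + (p + 1)) * P0 m) = 0 := by
        linear_combination -h
      have := mul_eq_zero.mp hz
      rcases this with h' | h'
      · exact absurd h' hdet'
      · linarith [sub_eq_zero.mp h']
    -- descend to 0
    have down : ∀ m, P2 m * P0 (m + (p + 1)) = P2 (m + (p + 1)) * P0 m →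
        P2 0 * P0 (p + 1) = P2 (p + 1) * P0 0 := by
      intro m
      induction m with
      | zero => intro h; simpa using h
      | succ n ih => intro h; exact ih (desc n h)
    have hbase : F2 * P0 (p + 1) = P2 (p + 1) * F0 := by
      have := down a hcross
      rwa [h00, h20] at this
    -- trace nonzero
    have hTne : T ≠ 0 := by
      intro h
      apply hP2 1
      rw [h2 0, h00, h20]
      rw [hT] at h
      linear_combination F2 * h
    -- eigenvalue setup
    have hdiscpos : (0:ℝ) < (F0 - F4) ^ 2 + 4 * F2 ^ 2 := by positivity
    set e : ℝ := Real.sqrt ((F0 - F4) ^ 2 + 4 * F2 ^ 2) with hE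
    have he2 : e ^ 2 = (F0 - F4) ^ 2 + 4 * F2 ^ 2 := Real.sq_sqrt hdiscpos.le
    have hepos : 0 < e := Real.sqrt_pos.mpr hdiscpos
    set μ1 : ℝ := (T + e) / 2 with hm1
    set μ2 : ℝ := (T - e) / 2 with hm2
    have hsum : μ1 + μ2 = T := by rw [hm1, hm2]; ring
    have hprod : μ1 * μ2 = D := by rw [hm1, hm2, hD, hT]; linear_combination -he2 / 4
    have hdiff : μ1 - μ2 = e := by rw [hm1, hm2]; ring
    -- decomposition in basis {U, MU}
    have hdec : ∀ d, P0 d = (sAux T D d).1 * F0 + (sAux T D d).2 * (F0 * F0 + F2 * F2) ∧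
        P2 d = (sAux T D d).1 * F2 + (sAux T D d).2 * (F2 * F0 + F4 * F2) := by
      intro d
      induction d with
      | zero => simp [sAux, h00, h20]
      | succ n ih =>
        obtain ⟨i1, i2⟩ := ih
        constructor
        · rw [h0 n, i1, i2]
          show _ = (-D * (sAux T D n).2) * F0 + ((sAux T D n).1 + T * (sAux T D n).2) * _
          rw [hT, hD]; ring
        · rw [h2 n, i1, i2]
          show _ = (-D * (sAux T D n).2) * F2 + ((sAux T D n).1 + T * (sAux T D n).2) * _
          rw [hT, hD]; ring
    -- the independence of U and MU
    have hindep : F2 * (F0 * F0 + F2 * F2) - F0 * (F2 * F0 + F4 * F2) ≠ 0 := by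
      intro hz
      apply heig
      refine ⟨(F0 * F0 + F2 * F2) / F0, ?_⟩
      funext i
      fin_cases i
      · simp [Matrix.mulVec, dotProduct, Fin.sum_univ_two]
        field_simp
      · simp [Matrix.mulVec, dotProduct, Fin.sum_univ_two]
        field_simp
        have hz2 := (mul_eq_zero.mp (show F2 * (F2 ^ 2 - F0 * F4) = 0 by linear_combination hz)).resolve_left hF2.ne'
        linear_combination -hz2
    -- conclude b (p+1) = 0
    obtain ⟨e0, e2⟩ := hdec (p + 1)
    have hb0 : (sAux T D (p + 1)).2 = 0 := by
      have hz : (sAux T D (p + 1)).2 *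
          (F2 * (F0 * F0 + F2 * F2) - F0 * (F2 * F0 + F4 * F2)) = 0 := by
        rw [e0, e2] at hbase
        linear_combination hbase
      rcases mul_eq_zero.mp hz with h' | h'
      · exact h'
      · exact absurd h' hindep
    -- closed form for sAux
    have hcf : ∀ d, (sAux T D d).1 = (μ1 * μ2 ^ d - μ2 * μ1 ^ d) / e ∧
        (sAux T D d).2 = (μ1 ^ d - μ2 ^ d) / e := by
      intro d
      induction d with
      | zero =>
        constructor
        · show (1:ℝ) = _
          rw [pow_zero, pow_zero, mul_one, mul_one, hdiff, div_self hepos.ne']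
        · simp [sAux]
      | succ n ih =>
        obtain ⟨i1, i2⟩ := ih
        constructor
        · show -D * (sAux T D n).2 = _
          rw [i2, ← hprod]; ring
        · show (sAux T D n).1 + T * (sAux T D n).2 = _
          rw [i1, i2, ← hsum]; ring
    have hpow : μ1 ^ (p + 1) = μ2 ^ (p + 1) := by
      have := (hcf (p + 1)).2
      rw [hb0] at this
      have := (div_eq_zero_iff.mp this.symm).resolve_right hepos.ne'
      linarith [sub_eq_zero.mp this]
    have habs : |μ1| = |μ2| := by
      have h1 : |μ1| ^ (p + 1) = |μ2| ^ (p + 1) := by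
        rw [← abs_pow, ← abs_pow, hpow]
      exact (pow_left_inj₀ (abs_nonneg _) (abs_nonneg _) (Nat.succ_ne_zero p)).mp h1
    rcases abs_eq_abs.mp habs with h' | h'
    · have : e = 0 := by rw [← hdiff, h']; ring
      linarith
    · apply hTne
      rw [← hsum, h']; ring
  intro a b hab
  simp only at hab
  by_contra hne
  have hcross : P2 a * P0 b = P2 b * P0 a := (div_eq_div_iff (hP0 a) (hP0 b)).mp hab
  rcases lt_or_gt_of_ne hne with h | h
  · obtain ⟨p, hp⟩ : ∃ p, b = a + (p + 1) := ⟨b - a - 1, by omega⟩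
    subst hp
    exact key a p hcross
  · obtain ⟨p, hp⟩ : ∃ p, a = b + (p + 1) := ⟨a - b - 1, by omega⟩
    subst hp
    exact key b p hcross.symm
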